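/- In the two-factor Flesaker–Hughston model with A_t = f(t) + g(t) M_t, where f, g are strictly positive decreasing functions with F = Σ_i f(T_i) < ∞ and G = Σ_i g(T_i) < ∞, and M a strictly positive càdlàg martingale with M_0 = 1, the weighted bond sums S_n(t) = δ Σ_{i=1}^n P(t,T_i) with P(t,T) = (f(T) + g(T)M_t)/(f(t) + g(t)M_t) converge in ucp to S_∞(t) = δ(F + G M_t)/(f(t) + g(t)M_t), and hence the long-term swap rate equals R_t = (f(t) + g(t)M_t)/(δ(F + G M_t)) a.s. for all t ≥ 0. -/

import Mathlib

open MeasureTheory Filter Set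

variable {Ω : Type*} [MeasurableSpace Ω]

/-- Uniform convergence on compacts in probability (ucp). -/
def UcpTendsto (μ : Measure Ω) (X : ℕ → ℝ → Ω → ℝ) (Y : ℝ → Ω → ℝ) : Prop :=
  ∀ t > (0 : ℝ), ∀ ε > (0 : ℝ),
    Tendsto (fun n => μ {ω | ∃ s ∈ Icc (0 : ℝ) t, ε < |X n s ω - Y s ω|}) atTop (nhds 0)

/-- Convergence to `+∞` uniformly on compacts in probability. -/
def UcpTendstoTop (μ : Measure Ω) (X : ℕ → ℝ → Ω → ℝ) : Prop :=
  ∀ t > (0 : ℝ), ∀ M > (0 : ℝ),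
    Tendsto (fun n => μ {ω | ∀ s ∈ Icc (0 : ℝ) t, M < X n s ω}) atTop (nhds 1)

/-- Convergence to `-∞` uniformly on compacts in probability. -/
def UcpTendstoBot (μ : Measure Ω) (X : ℕ → ℝ → Ω → ℝ) : Prop :=
  ∀ t > (0 : ℝ), ∀ M > (0 : ℝ),
    Tendsto (fun n => μ {ω | ∀ s ∈ Icc (0 : ℝ) t, X n s ω < -M}) atTop (nhds 1)

/-- Weighted partial sums `S_n(t) = ∑_{i=1}^n (T_i - T_{i-1}) P(t, T_i)` of bond prices. -/
noncomputable def bondSum (T : ℕ → ℝ) (B : ℕ → ℝ → Ω → ℝ) (n : ℕ) (t : ℝ) (ω : Ω) : ℝ :=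
  ∑ i ∈ Finset.Icc 1 n, (T i - T (i - 1)) * B i t ω

/-- OIS swap rate with maturity `T n`: `R(t,T_n) = (1 - P(t,T_n))/S_n(t)`. -/
noncomputable def swapRate (T : ℕ → ℝ) (B : ℕ → ℝ → Ω → ℝ) (n : ℕ) (t : ℝ) (ω : Ω) : ℝ :=
  (1 - B n t ω) / bondSum T B n t ω

/-- Yield with maturity `T n`: `Y(t,T_n) = - log P(t,T_n)/(T_n - t)`. -/
noncomputable def yield (T : ℕ → ℝ) (B : ℕ → ℝ → Ω → ℝ) (n : ℕ) (t : ℝ) (ω : Ω) : ℝ :=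
  -Real.log (B n t ω) / (T n - t)

/-- Simple spot rate with maturity `T n`: `L(t,T_n) = (1/P(t,T_n) - 1)/(T_n - t)`. -/
noncomputable def simpleRate (T : ℕ → ℝ) (B : ℕ → ℝ → Ω → ℝ) (n : ℕ) (t : ℝ) (ω : Ω) : ℝ :=
  (1 / B n t ω - 1) / (T n - t)

private lemma frac_le_aux {a b c d m : ℝ} (ha : 0 ≤ a) (hb : 0 ≤ b)
    (hc : 0 < c) (hd : 0 < d) (hm : 0 < m) :
    (a + b * m) / (c + d * m) ≤ a / c + b / d := by
  rw [div_add_div _ _ hc.ne' hd.ne', div_le_div_iff₀ (by positivity) (by positivity)]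
  nlinarith [mul_nonneg ha (mul_nonneg (mul_nonneg hd.le hd.le) hm.le),
    mul_nonneg hb (mul_nonneg hc.le hc.le)]

private lemma min_le_frac {a b c d m : ℝ} (ha : 0 ≤ a) (hb : 0 ≤ b)
    (hc : 0 < c) (hd : 0 < d) (hm : 0 < m) :
    min (a / c) (b / d) ≤ (a + b * m) / (c + d * m) := by
  rcases le_total (a / c) (b / d) with h | h
  · rw [min_eq_left h]
    rw [div_le_div_iff₀ hc hd] at h
    rw [div_le_div_iff₀ hc (by positivity)]
    nlinarith [mul_le_mul_of_nonneg_right h hm.le]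
  · rw [min_eq_right h]
    rw [div_le_div_iff₀ hd hc] at h
    rw [div_le_div_iff₀ hd (by positivity)]
    nlinarith

/-- in the Flesaker–Hughston model `A_t = f(t) + g(t) M_t`, with `f, g`
strictly positive decreasing with summable values along the tenor and `M` a strictly
positive càdlàg martingale with `M_0 = 1`, the bond sums `S_n` converge in ucp to
`S_∞(t) = δ (F + G M_t)/(f(t) + g(t) M_t)` and the swap rates converge in ucp to the
long-term swap rate `R_t = (f(t) + g(t) M_t)/(δ (F + G M_t))`. -/
theorem flesakerHughston_longTermSwapRate
    {m : MeasurableSpace Ω} (μ : Measure Ω) [IsProbabilityMeasure μ]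
    (ℱ : Filtration ℝ m)
    (T : ℕ → ℝ) (B : ℕ → ℝ → Ω → ℝ) (δ : ℝ)
    (hδ : 0 < δ) (hT0 : 0 ≤ T 0) (hten : ∀ n : ℕ, T (n + 1) = T n + δ)
    (f g : ℝ → ℝ)
    (hfpos : ∀ t, 0 < f t) (hgpos : ∀ t, 0 < g t)
    (hfdec : Antitone f) (hgdec : Antitone g)
    (M : ℝ → Ω → ℝ)
    (hM : Martingale M ℱ μ)
    (hMpos : ∀ t ω, 0 < M t ω)
    (hMrc : ∀ ω t, ContinuousWithinAt (fun s => M s ω) (Ici t) t)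
    (hM0 : ∀ ω, M 0 ω = 1)
    (hFsum : Summable (fun i : ℕ => f (T (i + 1))))
    (hGsum : Summable (fun i : ℕ => g (T (i + 1))))
    (hbond : ∀ n t ω, B n t ω = (f (T n) + g (T n) * M t ω) / (f t + g t * M t ω)) :
    UcpTendsto μ (bondSum T B)
      (fun t ω => δ * ((∑' i : ℕ, f (T (i + 1))) + (∑' i : ℕ, g (T (i + 1))) * M t ω)
        / (f t + g t * M t ω)) ∧
    UcpTendsto μ (swapRate T B)
      (fun t ω => (f t + g t * M t ω)
        / (δ * ((∑' i : ℕ, f (T (i + 1))) + (∑' i : ℕ, g (T (i + 1))) * M t ω))) := by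
  classical
  set F := ∑' i : ℕ, f (T (i + 1)) with hFdef
  set G := ∑' i : ℕ, g (T (i + 1)) with hGdef
  have hDpos : ∀ (s : ℝ) (ω : Ω), 0 < f s + g s * M s ω :=
    fun s ω => add_pos (hfpos s) (mul_pos (hgpos s) (hMpos s ω))
  set Pf : ℕ → ℝ := fun n => ∑ i ∈ Finset.range n, f (T (i + 1)) with hPfdef
  set Pg : ℕ → ℝ := fun n => ∑ i ∈ Finset.range n, g (T (i + 1)) with hPgdef
  have hPfnn : ∀ n, 0 ≤ Pf n := fun n => Finset.sum_nonneg fun i _ => (hfpos _).le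
  have hPgnn : ∀ n, 0 ≤ Pg n := fun n => Finset.sum_nonneg fun i _ => (hgpos _).le
  have hPfle : ∀ n, Pf n ≤ F := fun n => Summable.sum_le_tsum _ (fun i _ => (hfpos _).le) hFsum
  have hPgle : ∀ n, Pg n ≤ G := fun n => Summable.sum_le_tsum _ (fun i _ => (hgpos _).le) hGsum
  -- explicit formula for the bond sums
  have hsum : ∀ n (s : ℝ) (ω : Ω), bondSum T B n s ω
      = δ * (Pf n + Pg n * M s ω) / (f s + g s * M s ω) := by
    intro n s ω
    unfold bondSum
    rw [← Finset.Ico_add_one_right_eq_Icc, Finset.sum_Ico_eq_sum_range]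
    have h3 : n + 1 - 1 = n := by omega
    rw [h3]
    have hterm : ∀ i ∈ Finset.range n, (T (1 + i) - T (1 + i - 1)) * B (1 + i) s ω
        = (δ * f (T (i + 1)) + δ * g (T (i + 1)) * M s ω) / (f s + g s * M s ω) := by
      intro i _
      have h1 : 1 + i - 1 = i := by omega
      have h2 : 1 + i = i + 1 := by omega
      rw [h1, h2, hbond, hten i]
      ring
    rw [Finset.sum_congr rfl hterm, ← Finset.sum_div]
    congr 1
    rw [Finset.sum_add_distrib, ← Finset.sum_mul, ← Finset.mul_sum, ← Finset.mul_sum]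
    simp only [hPfdef, hPgdef]
    ring
  -- tail sums tend to zero
  have htf : Tendsto (fun n => F - Pf n) atTop (nhds 0) := by
    have := (tendsto_const_nhds (x := F) (f := atTop)).sub hFsum.hasSum.tendsto_sum_nat
    simpa [hPfdef, hFdef] using this
  have htg : Tendsto (fun n => G - Pg n) atTop (nhds 0) := by
    have := (tendsto_const_nhds (x := G) (f := atTop)).sub hGsum.hasSum.tendsto_sum_nat
    simpa [hPgdef, hGdef] using this
  -- uniform deterministic bound on the error
  have hbound : ∀ (t : ℝ) (n : ℕ), ∀ s ∈ Icc (0 : ℝ) t, ∀ ω : Ω,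
      |δ * (F + G * M s ω) / (f s + g s * M s ω) - bondSum T B n s ω|
        ≤ δ * ((F - Pf n) / f t + (G - Pg n) / g t) := by
    intro t n s hs ω
    rw [hsum]
    have hM' := hMpos s ω
    have hD := hDpos s ω
    have htfnn : 0 ≤ F - Pf n := sub_nonneg.2 (hPfle n)
    have htgnn : 0 ≤ G - Pg n := sub_nonneg.2 (hPgle n)
    have h1 : δ * (F + G * M s ω) / (f s + g s * M s ω)
          - δ * (Pf n + Pg n * M s ω) / (f s + g s * M s ω)
        = δ * (((F - Pf n) + (G - Pg n) * M s ω) / (f s + g s * M s ω)) := by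
      field_simp
      ring
    rw [h1, abs_of_nonneg (mul_nonneg hδ.le (div_nonneg
      (add_nonneg htfnn (mul_nonneg htgnn hM'.le)) hD.le))]
    have h2 := frac_le_aux htfnn htgnn (hfpos s) (hgpos s) hM'
    have h3 : (F - Pf n) / f s ≤ (F - Pf n) / f t :=
      div_le_div_of_nonneg_left htfnn (hfpos t) (hfdec hs.2)
    have h4 : (G - Pg n) / g s ≤ (G - Pg n) / g t :=
      div_le_div_of_nonneg_left htgnn (hgpos t) (hgdec hs.2)
    calc δ * (((F - Pf n) + (G - Pg n) * M s ω) / (f s + g s * M s ω))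
        ≤ δ * ((F - Pf n) / f s + (G - Pg n) / g s) := mul_le_mul_of_nonneg_left h2 hδ.le
      _ ≤ δ * ((F - Pf n) / f t + (G - Pg n) / g t) :=
          mul_le_mul_of_nonneg_left (add_le_add h3 h4) hδ.le
  -- part 1 : ucp convergence of the bond sums
  have part1 : UcpTendsto μ (bondSum T B)
      (fun t ω => δ * (F + G * M t ω) / (f t + g t * M t ω)) := by
    intro t ht ε hε
    have herr : Tendsto (fun n => δ * ((F - Pf n) / f t + (G - Pg n) / g t)) atTop (nhds 0) := by
      have := ((htf.div_const (f t)).add (htg.div_const (g t))).const_mul δ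
      simpa using this
    have hev : ∀ᶠ n in atTop, δ * ((F - Pf n) / f t + (G - Pg n) / g t) < ε :=
      herr.eventually_lt_const hε
    refine Tendsto.congr' ?_ (tendsto_const_nhds (x := (0 : ENNReal)))
    filter_upwards [hev] with n hn
    have hempty : {ω : Ω | ∃ s ∈ Icc (0 : ℝ) t,
        ε < |bondSum T B n s ω - δ * (F + G * M s ω) / (f s + g s * M s ω)|} = ∅ := by
      ext ω
      simp only [mem_setOf_eq, mem_empty_iff_false, iff_false]
      rintro ⟨s, hs, hlt⟩
      have hb := hbound t n s hs ω
      rw [abs_sub_comm] at hb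
      exact absurd hlt (not_lt.2 (hb.trans hn.le))
    rw [hempty, measure_empty]
  refine ⟨part1, ?_⟩
  -- positivity of F, G and the lower-bound constants
  have hF1 : f (T 1) ≤ F := by
    have := Summable.le_tsum hFsum 0 (fun j _ => (hfpos _).le)
    simpa using this
  have hG1 : g (T 1) ≤ G := by
    have := Summable.le_tsum hGsum 0 (fun j _ => (hgpos _).le)
    simpa using this
  have hFpos : 0 < F := lt_of_lt_of_le (hfpos _) hF1
  have hGpos : 0 < G := lt_of_lt_of_le (hgpos _) hG1
  set c1 := min (f (T 1) / f 0) (g (T 1) / g 0) with hc1def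
  have hc1 : 0 < c1 := lt_min (div_pos (hfpos _) (hfpos 0)) (div_pos (hgpos _) (hgpos 0))
  set c2 := min (F / f 0) (G / g 0) with hc2def
  have hc2 : 0 < c2 := lt_min (div_pos hFpos (hfpos 0)) (div_pos hGpos (hgpos 0))
  -- lower bound for the bond sums
  have hSnlb : ∀ n, 1 ≤ n → ∀ s : ℝ, 0 ≤ s → ∀ ω : Ω, δ * c1 ≤ bondSum T B n s ω := by
    intro n hn s hs ω
    rw [hsum, mul_div_assoc]
    refine mul_le_mul_of_nonneg_left ?_ hδ.le
    have hf1 : f (T 1) ≤ Pf n := by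
      simp only [hPfdef]
      simpa using Finset.single_le_sum (f := fun i => f (T (i + 1)))
        (fun i _ => (hfpos _).le) (Finset.mem_range.2 hn)
    have hg1 : g (T 1) ≤ Pg n := by
      simp only [hPgdef]
      simpa using Finset.single_le_sum (f := fun i => g (T (i + 1)))
        (fun i _ => (hgpos _).le) (Finset.mem_range.2 hn)
    refine le_trans (le_min ?_ ?_)
      (min_le_frac (hPfnn n) (hPgnn n) (hfpos s) (hgpos s) (hMpos s ω))
    · exact (min_le_left _ _).trans (div_le_div₀ (hPfnn n) hf1 (hfpos s) (hfdec hs))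
    · exact (min_le_right _ _).trans (div_le_div₀ (hPgnn n) hg1 (hgpos s) (hgdec hs))
  -- lower bound for the limit
  have hYlb : ∀ s : ℝ, 0 ≤ s → ∀ ω : Ω,
      δ * c2 ≤ δ * (F + G * M s ω) / (f s + g s * M s ω) := by
    intro s hs ω
    rw [mul_div_assoc]
    refine mul_le_mul_of_nonneg_left ?_ hδ.le
    refine le_trans (le_min ?_ ?_)
      (min_le_frac hFpos.le hGpos.le (hfpos s) (hgpos s) (hMpos s ω))
    · exact (min_le_left _ _).trans (div_le_div₀ hFpos.le le_rfl (hfpos s) (hfdec hs))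
    · exact (min_le_right _ _).trans (div_le_div₀ hGpos.le le_rfl (hgpos s) (hgdec hs))
  -- upper bound and positivity for the bond prices
  have hBub : ∀ (t : ℝ) (n : ℕ), ∀ s ∈ Icc (0 : ℝ) t, ∀ ω : Ω,
      B n s ω ≤ f (T n) / f t + g (T n) / g t := by
    intro t n s hs ω
    rw [hbond]
    refine le_trans (frac_le_aux (hfpos _).le (hgpos _).le (hfpos s) (hgpos s) (hMpos s ω)) ?_
    exact add_le_add (div_le_div₀ (hfpos _).le le_rfl (hfpos t) (hfdec hs.2))
      (div_le_div₀ (hgpos _).le le_rfl (hgpos t) (hgdec hs.2))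
  have hBpos : ∀ (n : ℕ) (s : ℝ) (ω : Ω), 0 < B n s ω := by
    intro n s ω
    rw [hbond]
    exact div_pos (add_pos (hfpos _) (mul_pos (hgpos _) (hMpos s ω))) (hDpos s ω)
  have hfT : Tendsto (fun n => f (T n)) atTop (nhds 0) :=
    (tendsto_add_atTop_iff_nat 1).1 hFsum.tendsto_atTop_zero
  have hgT : Tendsto (fun n => g (T n)) atTop (nhds 0) :=
    (tendsto_add_atTop_iff_nat 1).1 hGsum.tendsto_atTop_zero
  -- part 2 : ucp convergence of the swap rates
  intro t ht ε hε
  set η : ℕ → ℝ := fun n =>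
      δ * ((F - Pf n) / f t + (G - Pg n) / g t) / (δ * c1 * (δ * c2))
        + (f (T n) / f t + g (T n) / g t) / (δ * c1) with hηdef
  have hηt : Tendsto η atTop (nhds 0) := by
    have h1 := (((htf.div_const (f t)).add (htg.div_const (g t))).const_mul δ).div_const
      (δ * c1 * (δ * c2))
    have h2 := ((hfT.div_const (f t)).add (hgT.div_const (g t))).div_const (δ * c1)
    have := h1.add h2
    simpa [hηdef] using this
  have hev : ∀ᶠ n in atTop, η n < ε := hηt.eventually_lt_const hε
  refine Tendsto.congr' ?_ (tendsto_const_nhds (x := (0 : ENNReal)))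
  filter_upwards [hev, eventually_ge_atTop 1] with n hn hn1
  have hempty : {ω : Ω | ∃ s ∈ Icc (0 : ℝ) t,
      ε < |swapRate T B n s ω - (f s + g s * M s ω) / (δ * (F + G * M s ω))|} = ∅ := by
    ext ω
    simp only [mem_setOf_eq, mem_empty_iff_false, iff_false]
    rintro ⟨s, hs, hlt⟩
    have hSn : δ * c1 ≤ bondSum T B n s ω := hSnlb n hn1 s hs.1 ω
    have hSnpos : 0 < bondSum T B n s ω :=
      lt_of_lt_of_le (mul_pos hδ hc1) hSn
    have hY : δ * c2 ≤ δ * (F + G * M s ω) / (f s + g s * M s ω) := hYlb s hs.1 ω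
    have hYpos : 0 < δ * (F + G * M s ω) / (f s + g s * M s ω) :=
      lt_of_lt_of_le (mul_pos hδ hc2) hY
    have hRY : (f s + g s * M s ω) / (δ * (F + G * M s ω))
        = 1 / (δ * (F + G * M s ω) / (f s + g s * M s ω)) := (one_div_div _ _).symm
    have htfnn : 0 ≤ F - Pf n := sub_nonneg.2 (hPfle n)
    have htgnn : 0 ≤ G - Pg n := sub_nonneg.2 (hPgle n)
    have hBp := hBpos n s ω
    have hBu := hBub t n s hs ω
    have key : |swapRate T B n s ω - (f s + g s * M s ω) / (δ * (F + G * M s ω))| ≤ η n := by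
      rw [hRY]
      unfold swapRate
      have hsplit : (1 - B n s ω) / bondSum T B n s ω
            - 1 / (δ * (F + G * M s ω) / (f s + g s * M s ω))
          = (1 / bondSum T B n s ω - 1 / (δ * (F + G * M s ω) / (f s + g s * M s ω)))
            + -(B n s ω / bondSum T B n s ω) := by ring
      rw [hsplit]
      refine (abs_add_le _ _).trans ?_
      rw [abs_neg]
      have e1 : |1 / bondSum T B n s ω - 1 / (δ * (F + G * M s ω) / (f s + g s * M s ω))|
          ≤ δ * ((F - Pf n) / f t + (G - Pg n) / g t) / (δ * c1 * (δ * c2)) := by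
        rw [div_sub_div _ _ hSnpos.ne' hYpos.ne', one_mul, mul_one, abs_div,
          abs_of_pos (mul_pos hSnpos hYpos)]
        refine div_le_div₀ (mul_nonneg hδ.le (add_nonneg (div_nonneg htfnn (hfpos t).le)
          (div_nonneg htgnn (hgpos t).le))) ?_ (mul_pos (mul_pos hδ hc1) (mul_pos hδ hc2))
          (mul_le_mul hSn hY (mul_pos hδ hc2).le hSnpos.le)
        exact hbound t n s hs ω
      have e2 : |B n s ω / bondSum T B n s ω| ≤ (f (T n) / f t + g (T n) / g t) / (δ * c1) := by
        rw [abs_of_pos (div_pos hBp hSnpos)]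
        exact div_le_div₀ (add_nonneg (div_nonneg (hfpos _).le (hfpos t).le)
          (div_nonneg (hgpos _).le (hgpos t).le)) hBu (mul_pos hδ hc1) hSn
      exact add_le_add e1 e2
    exact absurd hlt (not_lt.2 (key.trans hn.le))
  rw [hempty, measure_empty]
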